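/- Let q ≥ 2 and k ≥ 2 be integers. Then the function r ↦ q^{2(k−r)} ((q^r − 1) q^{r−1} + q^r) is strictly decreasing in r on the integers 0 ≤ r ≤ k. Equivalently, for matrices A, B ∈ M_k(F) over a finite field F with rank A < rank B, the set {(x,y) ∈ F^k × F^k : xᵀ A y = 0} has strictly larger cardinality than {(x,y) ∈ F^k × F^k : xᵀ B y = 0}. -/

import Mathlib

open Matrix Module

section aux

variable {k : ℕ} {F : Type} [Field F] [Fintype F]

/-- dot product with fixed `c` as a linear map -/
noncomputable def dpLin (c : Fin k → F) : (Fin k → F) →ₗ[F] F where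
  toFun y := dotProduct c y
  map_add' x y := by simp [dotProduct_add]
  map_smul' m x := by simp [dotProduct_smul]

lemma card_dot_zero_ne (c : Fin k → F) (hc : c ≠ 0) :
    Nat.card {y : Fin k → F // dotProduct c y = 0} = Fintype.card F ^ (k - 1) := by
  classical
  have hsurj : Function.Surjective (dpLin c) := by
    obtain ⟨i, hi⟩ : ∃ i, c i ≠ 0 := by
      by_contra h; push_neg at h; exact hc (funext fun i => h i)
    intro z
    refine ⟨Pi.single i (z / c i), ?_⟩
    simp [dpLin, dotProduct_single, mul_div_cancel₀, hi]
  have hrange : finrank F (LinearMap.range (dpLin c)) = 1 := by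
    rw [LinearMap.range_eq_top.mpr hsurj]; simp
  have hker : finrank F (LinearMap.ker (dpLin c)) = k - 1 := by
    have := LinearMap.finrank_range_add_finrank_ker (dpLin c)
    rw [hrange] at this
    simp only [Module.finrank_pi, Fintype.card_fin] at this
    omega
  have : Nat.card {y : Fin k → F // dotProduct c y = 0}
      = Fintype.card (LinearMap.ker (dpLin c)) := by
    rw [Nat.card_eq_fintype_card]
    exact Fintype.card_congr (Equiv.subtypeEquivRight (fun y => by
      simp [LinearMap.mem_ker, dpLin]))
  rw [this, card_eq_pow_finrank (K := F), hker]

lemma card_dot_zero_eq (c : Fin k → F) (hc : c = 0) :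
    Nat.card {y : Fin k → F // dotProduct c y = 0} = Fintype.card F ^ k := by
  classical
  subst hc
  rw [Nat.card_congr (Equiv.subtypeUnivEquiv (fun y => zero_dotProduct y)),
    Nat.card_eq_fintype_card, Fintype.card_fun, Fintype.card_fin]

lemma card_ker_transpose (A : Matrix (Fin k) (Fin k) F) :
    Nat.card {x : Fin k → F // x ᵥ* A = 0} = Fintype.card F ^ (k - A.rank) := by
  classical
  have hker : finrank F (LinearMap.ker Aᵀ.mulVecLin) = k - A.rank := by
    have h1 := LinearMap.finrank_range_add_finrank_ker Aᵀ.mulVecLin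
    have h2 : finrank F (LinearMap.range Aᵀ.mulVecLin) = A.rank := by
      rw [← Matrix.rank]; exact Matrix.rank_transpose A
    simp only [Module.finrank_pi, Fintype.card_fin] at h1
    omega
  have heq : Nat.card {x : Fin k → F // x ᵥ* A = 0}
      = Fintype.card (LinearMap.ker Aᵀ.mulVecLin) := by
    rw [Nat.card_eq_fintype_card]
    exact Fintype.card_congr (Equiv.subtypeEquivRight (fun x => by
      simp [LinearMap.mem_ker, Matrix.mulVecLin_apply, Matrix.mulVec_transpose]))
  rw [heq, card_eq_pow_finrank (K := F), hker]

lemma count_pairs (A : Matrix (Fin k) (Fin k) F) :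
    Nat.card {p : (Fin k → F) × (Fin k → F) //
        dotProduct p.1 (A.mulVec p.2) = 0}
      = Fintype.card F ^ (k - A.rank) * Fintype.card F ^ k
        + (Fintype.card F ^ k - Fintype.card F ^ (k - A.rank)) * Fintype.card F ^ (k - 1) := by
  classical
  set q := Fintype.card F with hqdef
  have hcongr : Nat.card {p : (Fin k → F) × (Fin k → F) //
        dotProduct p.1 (A.mulVec p.2) = 0}
      = ∑ x : Fin k → F, Nat.card {y : Fin k → F // dotProduct (x ᵥ* A) y = 0} := by
    rw [Nat.card_congr (Equiv.subtypeProdEquivSigmaSubtype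
      (fun x y : Fin k → F => dotProduct x (A.mulVec y) = 0))]
    rw [Nat.card_eq_fintype_card, Fintype.card_sigma]
    refine Finset.sum_congr rfl fun x _ => ?_
    rw [Nat.card_eq_fintype_card]
    exact Fintype.card_congr (Equiv.subtypeEquivRight (fun y => by
      rw [Matrix.dotProduct_mulVec]))
  rw [hcongr]
  have hsum : ∀ x : Fin k → F,
      Nat.card {y : Fin k → F // dotProduct (x ᵥ* A) y = 0}
        = if x ᵥ* A = 0 then q ^ k else q ^ (k - 1) := by
    intro x
    by_cases h : x ᵥ* A = 0
    · rw [if_pos h]; exact card_dot_zero_eq _ h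
    · rw [if_neg h]; exact card_dot_zero_ne _ h
  simp only [hsum]
  rw [Finset.sum_ite, Finset.sum_const, Finset.sum_const, smul_eq_mul, smul_eq_mul]
  have hfilter : (Finset.univ.filter fun x : Fin k → F => x ᵥ* A = 0).card
      = q ^ (k - A.rank) := by
    rw [← Fintype.card_subtype, ← Nat.card_eq_fintype_card]
    exact card_ker_transpose A
  have hfilter2 : (Finset.univ.filter fun x : Fin k → F => ¬ x ᵥ* A = 0).card
      = q ^ k - q ^ (k - A.rank) := by
    rw [Finset.filter_not, Finset.card_sdiff_of_subset (Finset.filter_subset _ _), hfilter,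
      Finset.card_univ, Fintype.card_fun, Fintype.card_fin]
  rw [hfilter, hfilter2]

end aux

lemma pow_count_rewrite (q k a : ℕ) (hq : 1 ≤ q) (ha : a ≤ q ^ k) (hk : 1 ≤ k) :
    a * q ^ k + (q ^ k - a) * q ^ (k - 1)
      = a * (q ^ k - q ^ (k - 1)) + q ^ k * q ^ (k - 1) := by
  have hle : q ^ (k - 1) ≤ q ^ k := Nat.pow_le_pow_right hq (by omega)
  zify [ha, hle]; ring

lemma strict_main (q k a b : ℕ) (hq : 2 ≤ q) (hk : 1 ≤ k) (hba : b < a) (ha : a ≤ q ^ k) :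
    b * q ^ k + (q ^ k - b) * q ^ (k - 1) < a * q ^ k + (q ^ k - a) * q ^ (k - 1) := by
  rw [pow_count_rewrite q k a (by omega) ha hk, pow_count_rewrite q k b (by omega) (by omega) hk]
  have hD : 0 < q ^ k - q ^ (k - 1) := by
    have : q ^ (k - 1) < q ^ k := Nat.pow_lt_pow_right (by omega) (by omega)
    omega
  exact Nat.add_lt_add_right (Nat.mul_lt_mul_of_pos_right hba hD) _

lemma formula_eq (q k r : ℕ) (hq : 1 ≤ q) (hk : 1 ≤ k) (hr : r ≤ k) :
    q ^ (2 * (k - r)) * ((q ^ r - 1) * q ^ (r - 1) + q ^ r)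
      = q ^ (k - r) * q ^ k + (q ^ k - q ^ (k - r)) * q ^ (k - 1) := by
  obtain ⟨m, rfl⟩ : ∃ m, k = r + m := ⟨k - r, by omega⟩
  have hle2 : q ^ m ≤ q ^ (r + m) := Nat.pow_le_pow_right hq (by omega)
  rw [show r + m - r = m by omega]
  rw [pow_count_rewrite q (r + m) (q ^ m) hq hle2 hk]
  rcases Nat.eq_zero_or_pos r with hr0 | hr0
  · subst hr0
    obtain ⟨m', rfl⟩ : ∃ m', m = m' + 1 := ⟨m - 1, by omega⟩
    simp only [pow_zero, Nat.sub_self, Nat.zero_add, Nat.add_sub_cancel, Nat.zero_mul,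
      Nat.zero_add, Nat.one_mul]
    have h1 : q ^ m' ≤ q ^ (m' + 1) := Nat.pow_le_pow_right hq (by omega)
    zify [h1]
    ring
  · obtain ⟨r', rfl⟩ : ∃ r', r = r' + 1 := ⟨r - 1, by omega⟩
    have h1 : (1 : ℕ) ≤ q ^ (r' + 1) := Nat.one_le_pow _ _ (by omega)
    have h2 : q ^ (r' + 1 + m - 1) ≤ q ^ (r' + 1 + m) := Nat.pow_le_pow_right hq (by omega)
    rw [show r' + 1 - 1 = r' by omega, show r' + 1 + m - 1 = r' + m by omega]
    have h2' : q ^ (r' + m) ≤ q ^ (r' + 1 + m) := Nat.pow_le_pow_right hq (by omega)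
    zify [h1, h2']
    ring

/-- For integers `q ≥ 2` and `k ≥ 2`, the function
`r ↦ q^{2(k−r)}((qʳ − 1) q^{r−1} + qʳ)` is strictly decreasing for `0 ≤ r ≤ k`.
Equivalently, for matrices `A, B ∈ M_k(F)` over a finite field `F` of cardinality `q`
with `rank A < rank B`, the set `{(x,y) : xᵀ A y = 0}` is strictly larger than
`{(x,y) : xᵀ B y = 0}`. -/
theorem bilinear_zero_pairs_strict_anti (q k : ℕ) (hq : 2 ≤ q) (hk : 2 ≤ k) :
    (∀ r s : ℕ, r < s → s ≤ k →
        q ^ (2 * (k - s)) * ((q ^ s - 1) * q ^ (s - 1) + q ^ s) <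
          q ^ (2 * (k - r)) * ((q ^ r - 1) * q ^ (r - 1) + q ^ r)) ∧
    (∀ (F : Type) [Field F] [Fintype F], Fintype.card F = q →
        ∀ A B : Matrix (Fin k) (Fin k) F, A.rank < B.rank →
          Nat.card {p : (Fin k → F) × (Fin k → F) //
              dotProduct p.1 (B.mulVec p.2) = 0} <
            Nat.card {p : (Fin k → F) × (Fin k → F) //
              dotProduct p.1 (A.mulVec p.2) = 0}) := by
  constructor
  · intro r s hrs hsk
    rw [formula_eq q k r (by omega) (by omega) (by omega),
        formula_eq q k s (by omega) (by omega) hsk]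
    apply strict_main q k _ _ hq (by omega)
    · exact Nat.pow_lt_pow_right (by omega) (by omega)
    · exact Nat.pow_le_pow_right (by omega) (by omega)
  · intro F _ _ hF A B hAB
    rw [count_pairs A, count_pairs B, hF]
    have hBk : B.rank ≤ k := by simpa using B.rank_le_card_width
    apply strict_main q k _ _ hq (by omega)
    · exact Nat.pow_lt_pow_right (by omega) (by omega)
    · exact Nat.pow_le_pow_right (by omega) (by omega)
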